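/- Let G be a 3-uniform hypergraph with λ(G) > λ(K_{k+1}^3) and let x be an optimum weight vector. If v is a vertex whose link graph G_v has clique number at most k, then x_v < 1/(k+1). -/

import Mathlib

open Finset

/-- A (finite) hypergraph with vertex set `verts ⊆ ℕ` and edge set `edges`. -/
structure FinHypergraph where
  verts : Finset ℕ
  edges : Finset (Finset ℕ)

/-- Well-formedness: every edge is a subset of the vertex set. -/
def FinHypergraph.IsWf (G : FinHypergraph) : Prop := ∀ e ∈ G.edges, e ⊆ G.verts

/-- `G` is `r`-uniform: every edge has `r` vertices. -/
def FinHypergraph.IsUniform (G : FinHypergraph) (r : ℕ) : Prop := ∀ e ∈ G.edges, e.card = r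

/-- The Lagrangian polynomial `λ(G, x) = ∑_{e ∈ E(G)} ∏_{i ∈ e} x_i`. -/
noncomputable def lagPoly (G : FinHypergraph) (x : ℕ → ℝ) : ℝ := ∑ e ∈ G.edges, ∏ i ∈ e, x i

/-- Feasible weight vectors: the standard simplex on the vertex set of `G`. -/
def simplex (G : FinHypergraph) : Set (ℕ → ℝ) :=
  {x | (∀ i, 0 ≤ x i ∧ x i ≤ 1) ∧ ∑ i ∈ G.verts, x i = 1}

/-- The Lagrangian `λ(G)`: the supremum of `λ(G, x)` over the simplex. -/
noncomputable def lag (G : FinHypergraph) : ℝ := sSup (lagPoly G '' simplex G)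

/-- The complete 3-graph `K_m³` on `m` vertices. -/
def completeG (m : ℕ) : FinHypergraph :=
  ⟨Finset.range m, (Finset.range m).powersetCard 3⟩

/-- The link graph `G_v = {ab : vab ∈ E(G)}` of a vertex `v`, as a simple graph. -/
def linkGraph (G : FinHypergraph) (v : ℕ) : SimpleGraph ℕ :=
  SimpleGraph.fromRel (fun a b => ({v, a, b} : Finset ℕ) ∈ G.edges)

section MS

variable {H : SimpleGraph ℕ} [DecidableRel H.Adj]

private lemma F_eq (S : Finset ℕ) (f : ℕ → ℕ → ℝ) :
    ∑ p ∈ (S ×ˢ S).filter (fun p => H.Adj p.1 p.2), f p.1 p.2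
      = ∑ c ∈ S, ∑ d ∈ S.filter (fun d => H.Adj c d), f c d := by
  rw [Finset.sum_filter, Finset.sum_product]
  simp [Finset.sum_filter]

private lemma ms_clique (k : ℕ) (hk : 1 ≤ k)
    (hcl : ∀ K : Finset ℕ, H.IsClique (K : Set ℕ) → K.card ≤ k)
    (S : Finset ℕ) (y : ℕ → ℝ) (hy : ∀ i, 0 ≤ y i)
    (hclq : H.IsClique ((S.filter (fun c => 0 < y c)) : Set ℕ)) :
    ∑ p ∈ (S ×ˢ S).filter (fun p => H.Adj p.1 p.2), y p.1 * y p.2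
      ≤ (1 - 1/(k:ℝ)) * (∑ i ∈ S, y i)^2 := by
  classical
  set T := S.filter (fun c => 0 < y c) with hT
  have hTS : T ⊆ S := filter_subset _ _
  have hTk : T.card ≤ k := hcl T hclq
  have hzero : ∀ c ∈ S, c ∉ T → y c = 0 := by
    intro c hcS hcT
    rw [hT, mem_filter] at hcT
    push_neg at hcT
    have h1 := hy c
    have h2 := hcT hcS
    linarith
  have hsum : ∑ i ∈ T, y i = ∑ i ∈ S, y i :=
    Finset.sum_subset hTS (fun c h1 h2 => hzero c h1 h2)
  have step1 : ∑ p ∈ (S ×ˢ S).filter (fun p => H.Adj p.1 p.2), y p.1 * y p.2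
      = ∑ p ∈ ((S ×ˢ S).filter (fun p => H.Adj p.1 p.2)).filter
          (fun p => p.1 ∈ T ∧ p.2 ∈ T), y p.1 * y p.2 := by
    symm
    apply Finset.sum_subset (filter_subset _ _)
    intro p hp hpT
    have hpS := mem_product.mp (mem_filter.mp hp).1
    have : p.1 ∉ T ∨ p.2 ∉ T := by
      by_contra hcon
      push_neg at hcon
      exact hpT (mem_filter.mpr ⟨hp, hcon.1, hcon.2⟩)
    rcases this with h | h
    · rw [hzero _ hpS.1 h, zero_mul]
    · rw [hzero _ hpS.2 h, mul_zero]
  rw [step1]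
  have step2 : (((S ×ˢ S).filter (fun p => H.Adj p.1 p.2)).filter
      (fun p => p.1 ∈ T ∧ p.2 ∈ T)) ⊆ T.offDiag := by
    intro p hp
    simp only [mem_filter, mem_product, Finset.mem_offDiag] at hp ⊢
    exact ⟨hp.2.1, hp.2.2, hp.1.2.ne⟩
  have step3 : ∑ p ∈ ((S ×ˢ S).filter (fun p => H.Adj p.1 p.2)).filter
      (fun p => p.1 ∈ T ∧ p.2 ∈ T), y p.1 * y p.2 ≤ ∑ p ∈ T.offDiag, y p.1 * y p.2 :=
    Finset.sum_le_sum_of_subset_of_nonneg step2 (fun p _ _ => mul_nonneg (hy _) (hy _))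
  have step4 : ∑ p ∈ T.offDiag, y p.1 * y p.2 = (∑ i ∈ T, y i)^2 - ∑ i ∈ T, (y i)^2 := by
    have h1 : ∑ p ∈ T.diag, y p.1 * y p.2 + ∑ p ∈ T.offDiag, y p.1 * y p.2
        = ∑ p ∈ T ×ˢ T, y p.1 * y p.2 := by
      rw [← Finset.sum_union (Finset.disjoint_diag_offDiag T), Finset.diag_union_offDiag]
    rw [Finset.sum_diag] at h1
    have h2 : ∑ p ∈ T ×ˢ T, y p.1 * y p.2 = (∑ i ∈ T, y i)^2 := by
      rw [Finset.sum_product, sq, Finset.sum_mul_sum]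
    have h3 : ∑ i ∈ T, y i * y i = ∑ i ∈ T, (y i)^2 := by
      apply Finset.sum_congr rfl; intro i _; ring
    linarith
  have hk' : (0:ℝ) < k := by exact_mod_cast hk
  have cauchy : (∑ i ∈ T, y i)^2 ≤ (T.card : ℝ) * ∑ i ∈ T, (y i)^2 := by
    exact sq_sum_le_card_mul_sum_sq
  have hsq : 0 ≤ ∑ i ∈ T, (y i)^2 := Finset.sum_nonneg (fun i _ => sq_nonneg _)
  have hTk' : (T.card : ℝ) ≤ k := by exact_mod_cast hTk
  have key : (∑ i ∈ S, y i)^2 / k ≤ ∑ i ∈ T, (y i)^2 := by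
    rw [div_le_iff₀ hk']
    calc (∑ i ∈ S, y i)^2 = (∑ i ∈ T, y i)^2 := by rw [hsum]
      _ ≤ (T.card : ℝ) * ∑ i ∈ T, (y i)^2 := cauchy
      _ ≤ (k:ℝ) * ∑ i ∈ T, (y i)^2 := mul_le_mul_of_nonneg_right hTk' hsq
      _ = (∑ i ∈ T, (y i)^2) * k := by ring
  refine le_trans (le_trans step3 (le_of_eq step4)) ?_
  rw [hsum]
  have expand : (1 - 1/(k:ℝ)) * (∑ i ∈ S, y i)^2
      = (∑ i ∈ S, y i)^2 - (∑ i ∈ S, y i)^2 / k := by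
    field_simp
  linarith

private lemma ms_shift (S : Finset ℕ) (y y' : ℕ → ℝ) (a b : ℕ)
    (ha : a ∈ S) (hb : b ∈ S) (hab : a ≠ b) (hnadj : ¬ H.Adj a b)
    (hL : ∑ d ∈ S.filter (fun d => H.Adj b d), y d ≤ ∑ d ∈ S.filter (fun d => H.Adj a d), y d)
    (hyb : 0 ≤ y b)
    (hy' : ∀ c, y' c = y c + y b * ((if c = a then (1:ℝ) else 0) - (if c = b then 1 else 0))) :
    ∑ p ∈ (S ×ˢ S).filter (fun p => H.Adj p.1 p.2), y p.1 * y p.2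
      ≤ ∑ p ∈ (S ×ˢ S).filter (fun p => H.Adj p.1 p.2), y' p.1 * y' p.2 := by
  classical
  set t := y b with ht
  set g : ℕ → ℝ := fun c => (if c = a then (1:ℝ) else 0) - (if c = b then 1 else 0) with hg
  set L : ℕ → ℝ := fun c => ∑ d ∈ S.filter (fun d => H.Adj c d), y d with hLdef
  have hnadj' : ¬ H.Adj b a := fun h => hnadj h.symm
  have inner2 : ∀ c, ∑ d ∈ S.filter (fun d => H.Adj c d), g d
      = (if H.Adj c a then (1:ℝ) else 0) - (if H.Adj c b then 1 else 0) := by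
    intro c
    rw [hg]
    rw [Finset.sum_sub_distrib]
    simp [Finset.sum_ite_eq', mem_filter, ha, hb]
  have expand : ∀ c d : ℕ, y' c * y' d
      = y c * y d + t * (g c * y d) + t * (y c * g d) + (t*t) * (g c * g d) := by
    intro c d; rw [hy', hy', hg]; ring
  have split : ∑ p ∈ (S ×ˢ S).filter (fun p => H.Adj p.1 p.2), y' p.1 * y' p.2
      = ∑ p ∈ (S ×ˢ S).filter (fun p => H.Adj p.1 p.2), y p.1 * y p.2
        + t * (∑ c ∈ S, g c * L c)
        + t * (∑ c ∈ S, y c * ((if H.Adj c a then (1:ℝ) else 0) - (if H.Adj c b then 1 else 0)))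
        + (t*t) * (∑ c ∈ S, g c * ((if H.Adj c a then (1:ℝ) else 0) - (if H.Adj c b then 1 else 0))) := by
    rw [F_eq S (fun c d => y' c * y' d), F_eq S (fun c d => y c * y d)]
    have : ∀ c ∈ S, ∑ d ∈ S.filter (fun d => H.Adj c d), y' c * y' d
        = (∑ d ∈ S.filter (fun d => H.Adj c d), y c * y d)
          + t * (g c * L c) + t * (y c * ((if H.Adj c a then (1:ℝ) else 0) - (if H.Adj c b then 1 else 0)))
          + (t*t) * (g c * ((if H.Adj c a then (1:ℝ) else 0) - (if H.Adj c b then 1 else 0))) := by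
      intro c _
      rw [Finset.sum_congr rfl (fun d _ => expand c d)]
      simp only [Finset.sum_add_distrib, ← Finset.mul_sum, inner2, hLdef]
    rw [Finset.sum_congr rfl this]
    simp only [Finset.sum_add_distrib, ← Finset.mul_sum]
  have I1 : ∑ c ∈ S, g c * L c = L a - L b := by
    rw [hg]
    simp only [sub_mul, ite_mul, one_mul, zero_mul]
    rw [Finset.sum_sub_distrib]
    simp [Finset.sum_ite_eq', ha, hb]
  have I2 : ∑ c ∈ S, y c * ((if H.Adj c a then (1:ℝ) else 0) - (if H.Adj c b then 1 else 0))
      = L a - L b := by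
    simp only [mul_sub, mul_ite, mul_one, mul_zero]
    rw [Finset.sum_sub_distrib]
    rw [← Finset.sum_filter, ← Finset.sum_filter]
    have e1 : S.filter (fun c => H.Adj c a) = S.filter (fun d => H.Adj a d) := by
      apply Finset.filter_congr; intro c _; simp [H.adj_comm]
    have e2 : S.filter (fun c => H.Adj c b) = S.filter (fun d => H.Adj b d) := by
      apply Finset.filter_congr; intro c _; simp [H.adj_comm]
    rw [e1, e2, hLdef]
  have I3 : ∑ c ∈ S, g c * ((if H.Adj c a then (1:ℝ) else 0) - (if H.Adj c b then 1 else 0)) = 0 := by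
    rw [hg]
    simp only [sub_mul, ite_mul, one_mul, zero_mul]
    rw [Finset.sum_sub_distrib]
    rw [Finset.sum_ite_eq', Finset.sum_ite_eq']
    simp [ha, hb, hnadj, hnadj', SimpleGraph.irrefl]
  rw [split, I1, I2, I3]
  have hLL : L b ≤ L a := hL
  nlinarith [hyb]

private lemma ms_main (k : ℕ) (hk : 1 ≤ k)
    (hcl : ∀ K : Finset ℕ, H.IsClique (K : Set ℕ) → K.card ≤ k)
    (S : Finset ℕ) :
    ∀ (n : ℕ) (y : ℕ → ℝ), (∀ i, 0 ≤ y i) → (S.filter (fun c => 0 < y c)).card ≤ n →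
      ∑ p ∈ (S ×ˢ S).filter (fun p => H.Adj p.1 p.2), y p.1 * y p.2
        ≤ (1 - 1/(k:ℝ)) * (∑ i ∈ S, y i)^2 := by
  intro n
  induction n with
  | zero =>
    intro y hy hcard
    apply ms_clique k hk hcl S y hy
    have h0 : S.filter (fun c => 0 < y c) = ∅ := Finset.card_eq_zero.mp (Nat.le_zero.mp hcard)
    rw [h0]
    simp [SimpleGraph.isClique_iff]
  | succ n ih =>
    intro y hy hcard
    by_cases hclq : H.IsClique ((S.filter (fun c => 0 < y c)) : Set ℕ)
    · exact ms_clique k hk hcl S y hy hclq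
    · have step : ∀ a b : ℕ, a ∈ S.filter (fun c => 0 < y c) → b ∈ S.filter (fun c => 0 < y c) →
          a ≠ b → ¬ H.Adj a b →
          (∑ d ∈ S.filter (fun d => H.Adj b d), y d ≤ ∑ d ∈ S.filter (fun d => H.Adj a d), y d) →
          ∑ p ∈ (S ×ˢ S).filter (fun p => H.Adj p.1 p.2), y p.1 * y p.2
            ≤ (1 - 1/(k:ℝ)) * (∑ i ∈ S, y i)^2 := by
        intro a b haT hbT hab hnadj hL
        have haS := (mem_filter.mp haT).1
        have hbS := (mem_filter.mp hbT).1
        have hya := (mem_filter.mp haT).2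
        have hyb := (mem_filter.mp hbT).2
        set y' : ℕ → ℝ := fun c =>
          y c + y b * ((if c = a then (1:ℝ) else 0) - (if c = b then 1 else 0)) with hy'def
        have hy'b : y' b = 0 := by simp [hy'def, (Ne.symm hab)]
        have hy'0 : ∀ i, 0 ≤ y' i := by
          intro c
          by_cases hca : c = a
          · subst hca; simp [hy'def, hab]; linarith
          · by_cases hcb : c = b
            · subst hcb; rw [hy'b]
            · simp [hy'def, hca, hcb]; exact hy c
        have hsum' : ∑ i ∈ S, y' i = ∑ i ∈ S, y i := by
          simp only [hy'def]
          rw [Finset.sum_add_distrib, ← Finset.mul_sum, Finset.sum_sub_distrib]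
          simp [Finset.sum_ite_eq', haS, hbS]
        have hsub : S.filter (fun c => 0 < y' c) ⊆ (S.filter (fun c => 0 < y c)).erase b := by
          intro c hc
          rw [mem_filter] at hc
          rw [Finset.mem_erase, mem_filter]
          have hcb : c ≠ b := by
            rintro rfl
            rw [hy'b] at hc
            exact lt_irrefl 0 hc.2
          refine ⟨hcb, hc.1, ?_⟩
          by_cases hca : c = a
          · subst hca; exact hya
          · have he : y' c = y c := by simp [hy'def, hca, hcb]
            rw [he] at hc; exact hc.2
        have hcard' : (S.filter (fun c => 0 < y' c)).card ≤ n := by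
          have h1 := Finset.card_le_card hsub
          rw [Finset.card_erase_of_mem hbT] at h1
          omega
        calc ∑ p ∈ (S ×ˢ S).filter (fun p => H.Adj p.1 p.2), y p.1 * y p.2
            ≤ ∑ p ∈ (S ×ˢ S).filter (fun p => H.Adj p.1 p.2), y' p.1 * y' p.2 :=
              ms_shift S y y' a b haS hbS hab hnadj hL (le_of_lt hyb) (fun c => rfl)
          _ ≤ (1 - 1/(k:ℝ)) * (∑ i ∈ S, y' i)^2 := ih y' hy'0 hcard'
          _ = (1 - 1/(k:ℝ)) * (∑ i ∈ S, y i)^2 := by rw [hsum']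
      rw [SimpleGraph.isClique_iff, Set.Pairwise] at hclq
      push_neg at hclq
      obtain ⟨a, haT, b, hbT, hab, hnadj⟩ := hclq
      rw [Finset.mem_coe] at haT hbT
      rcases le_total (∑ d ∈ S.filter (fun d => H.Adj b d), y d)
        (∑ d ∈ S.filter (fun d => H.Adj a d), y d) with h | h
      · exact step a b haT hbT hab hnadj h
      · exact step b a hbT haT (Ne.symm hab) (fun hadj => hnadj hadj.symm) h

end MS

private lemma le_lag (G : FinHypergraph) (y : ℕ → ℝ) (hy : y ∈ simplex G) :
    lagPoly G y ≤ lag G := by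
  apply le_csSup
  · refine ⟨(G.edges.card : ℝ), ?_⟩
    rintro r ⟨z, hz, rfl⟩
    calc lagPoly G z ≤ ∑ e ∈ G.edges, 1 := by
          apply Finset.sum_le_sum
          intro e _
          exact Finset.prod_le_one (fun i _ => (hz.1 i).1) (fun i _ => (hz.1 i).2)
      _ = (G.edges.card : ℝ) := by simp
  · exact ⟨y, hy, rfl⟩

private lemma decomp (G : FinHypergraph) (v : ℕ) (w : ℕ → ℝ) :
    lagPoly G w = w v * (∑ e ∈ G.edges.filter (fun e => v ∈ e), ∏ i ∈ e.erase v, w i)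
      + ∑ e ∈ G.edges.filter (fun e => v ∉ e), ∏ i ∈ e, w i := by
  classical
  rw [lagPoly, ← Finset.sum_filter_add_sum_filter_not G.edges (fun e => v ∈ e)]
  rw [Finset.mul_sum]
  congr 1
  apply Finset.sum_congr rfl
  intro e he
  exact (Finset.mul_prod_erase e w (mem_filter.mp he).2).symm

private lemma choose2 : ∀ m : ℕ, 2 * Nat.choose (m+2) 2 = (m+2)*(m+1) := by
  intro m
  induction m with
  | zero => rfl
  | succ n ih =>
    rw [Nat.choose_succ_succ (n+2) 1]
    rw [Nat.mul_add, ih, Nat.choose_one_right]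
    ring

private lemma choose3 : ∀ m : ℕ, 6 * Nat.choose (m+2) 3 = (m+2)*(m+1)*m := by
  intro m
  induction m with
  | zero => rfl
  | succ n ih =>
    rw [Nat.choose_succ_succ (n+2) 2]
    rw [Nat.mul_add, ih]
    have h2 : 6 * Nat.choose (n+2) 2 = 3 * ((n+2)*(n+1)) := by
      rw [← choose2 n]; ring
    rw [h2]
    ring

private lemma lag_complete (m : ℕ) :
    ((m:ℝ)+1)*m/(6*((m:ℝ)+2)^2) ≤ lag (completeG (m+2)) := by
  have hpos : (0:ℝ) < (m:ℝ)+2 := by positivity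
  set u : ℕ → ℝ := fun _ => 1/((m:ℝ)+2) with hu
  have husimplex : u ∈ simplex (completeG (m+2)) := by
    constructor
    · intro i
      constructor
      · positivity
      · rw [hu, div_le_one hpos]; linarith
    · show ∑ _i ∈ Finset.range (m+2), (1/((m:ℝ)+2)) = 1
      rw [Finset.sum_const, Finset.card_range, nsmul_eq_mul]
      push_cast
      field_simp
  have hval : lagPoly (completeG (m+2)) u = (Nat.choose (m+2) 3 : ℝ) * (1/((m:ℝ)+2))^3 := by
    rw [lagPoly]
    have hconst : ∀ e ∈ (completeG (m+2)).edges, ∏ i ∈ e, u i = (1/((m:ℝ)+2))^3 := by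
      intro e he
      rw [Finset.prod_const]
      have := (Finset.mem_powersetCard.mp he).2
      rw [this]
    rw [Finset.sum_congr rfl hconst, Finset.sum_const]
    show ((Finset.range (m+2)).powersetCard 3).card • ((1/((m:ℝ)+2))^3) = _
    rw [Finset.card_powersetCard, Finset.card_range, nsmul_eq_mul]
  have hle := le_lag (completeG (m+2)) u husimplex
  rw [hval] at hle
  refine le_trans (le_of_eq ?_) hle
  have hc : ((Nat.choose (m+2) 3 : ℕ) : ℝ) = ((m:ℝ)+2)*((m:ℝ)+1)*m/6 := by
    have := choose3 m
    have hcast : ((6 * Nat.choose (m+2) 3 : ℕ) : ℝ) = (((m+2)*(m+1)*m : ℕ) : ℝ) := by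
      exact_mod_cast congrArg (Nat.cast : ℕ → ℝ) this
    push_cast at hcast
    linarith
  rw [hc]
  field_simp

private lemma limit_lemma (c0 c1 c2 δ : ℝ) (hδ : 0 < δ)
    (h : ∀ ε : ℝ, 0 < ε → ε ≤ δ → c0*ε + c1*ε^2 + c2*ε^3 ≤ 0) : c0 ≤ 0 := by
  by_contra hc
  push_neg at hc
  set M := |c1| + |c2| + 1 with hM
  have hM1 : 1 ≤ M := by
    have := abs_nonneg c1
    have := abs_nonneg c2
    linarith
  set ε := min δ (min 1 (c0 / (2*M))) with hε
  have hε0 : 0 < ε := by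
    apply lt_min hδ
    apply lt_min one_pos
    positivity
  have hεδ : ε ≤ δ := min_le_left _ _
  have hε1 : ε ≤ 1 := le_trans (min_le_right _ _) (min_le_left _ _)
  have hεM : ε ≤ c0 / (2*M) := le_trans (min_le_right _ _) (min_le_right _ _)
  have hkey := h ε hε0 hεδ
  have h1 : c1 * ε^2 ≥ -(|c1| * ε^2) := by nlinarith [neg_abs_le c1, sq_nonneg ε]
  have h2 : c2 * ε^3 ≥ -(|c2| * ε^3) := by nlinarith [neg_abs_le c2, pow_pos hε0 3]
  have h3 : ε^3 ≤ ε^2 := by nlinarith [sq_nonneg ε]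
  have h4 : ε^2 ≤ ε * ε := by nlinarith
  have hMε : (|c1| + |c2|) * ε ≤ c0 / 2 := by
    have hMpos : 0 < 2*M := by linarith
    rw [le_div_iff₀ hMpos] at hεM
    nlinarith [abs_nonneg c1, abs_nonneg c2]
  nlinarith [abs_nonneg c1, abs_nonneg c2]

private lemma perturb (G : FinHypergraph) (hwf : G.IsWf) (hu : G.IsUniform 3)
    (x : ℕ → ℝ) (hx : x ∈ simplex G) (v : ℕ) (hv : v ∈ G.verts)
    (hxv : 0 < x v) (hxv1 : x v < 1) (hopt : lagPoly G x = lag G) :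
    3 * lagPoly G x ≤ ∑ e ∈ G.edges.filter (fun e => v ∈ e), ∏ i ∈ e.erase v, x i := by
  classical
  obtain ⟨hx01, hxsum⟩ := hx
  set A := ∑ e ∈ G.edges.filter (fun e => v ∈ e), ∏ i ∈ e.erase v, x i with hA
  set B := ∑ e ∈ G.edges.filter (fun e => v ∉ e), ∏ i ∈ e, x i with hB
  set r : ℝ := 1/(1 - x v) with hrdef
  have h1x : (0:ℝ) < 1 - x v := by linarith
  have hr : r * (1 - x v) = 1 := by rw [hrdef]; field_simp
  have hr0 : 0 < r := by rw [hrdef]; positivity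
  have hxi : ∀ i ∈ G.verts, i ≠ v → x i ≤ 1 - x v := by
    intro i hi hiv
    have hsub : ({v, i} : Finset ℕ) ⊆ G.verts := by
      intro j hj
      rcases Finset.mem_insert.mp hj with rfl | hj
      · exact hv
      · rw [Finset.mem_singleton.mp hj]; exact hi
    have hs := Finset.sum_le_sum_of_subset_of_nonneg hsub (fun j _ _ => (hx01 j).1)
    rw [Finset.sum_pair (Ne.symm hiv), hxsum] at hs
    linarith
  have hineq : ∀ ε : ℝ, 0 < ε → ε ≤ x v →
      (x v - ε)*(1+ε*r)^2*A + (1+ε*r)^3*B ≤ x v * A + B := by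
    intro ε hε0 hε1
    set c : ℝ := 1 + ε*r with hcdef
    have hc1 : 1 ≤ c := by nlinarith
    have hc0 : 0 ≤ c := by linarith
    set z : ℕ → ℝ := fun i => if i = v then x v - ε else if i ∈ G.verts then c * x i else x i
      with hzdef
    have hzsimplex : z ∈ simplex G := by
      constructor
      · intro i
        by_cases hiv : i = v
        · subst hiv
          simp only [hzdef, if_pos rfl]
          constructor
          · linarith
          · linarith [(hx01 i).2]
        · by_cases hiV : i ∈ G.verts
          · simp only [hzdef, if_neg hiv, if_pos hiV]
            constructor
            · have := (hx01 i).1; nlinarith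
            · have hxile := hxi i hiV hiv
              have : c * x i ≤ c * (1 - x v) :=
                mul_le_mul_of_nonneg_left hxile hc0
              have hceq : c * (1 - x v) = (1 - x v) + ε := by
                rw [hcdef]; linear_combination ε * hr
              linarith
          · simp only [hzdef, if_neg hiv, if_neg hiV]
            exact hx01 i
      · have hrw : ∀ i ∈ G.verts.erase v, z i = c * x i := by
          intro i hi
          have h1 := Finset.mem_erase.mp hi
          simp only [hzdef, if_neg h1.1, if_pos h1.2]
        rw [← Finset.add_sum_erase _ z hv]
        rw [Finset.sum_congr rfl hrw]
        rw [← Finset.mul_sum]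
        have hse : ∑ i ∈ G.verts.erase v, x i = 1 - x v := by
          rw [Finset.sum_erase_eq_sub hv, hxsum]
        rw [hse]
        have hzv : z v = x v - ε := by rw [hzdef]; exact if_pos rfl
        rw [hzv]
        have hceq : c * (1 - x v) = (1 - x v) + ε := by
          rw [hcdef]; linear_combination ε * hr
        rw [hceq]
        ring
    have hle : lagPoly G z ≤ lagPoly G x := by
      rw [hopt]; exact le_lag G z hzsimplex
    have hzval : lagPoly G z = (x v - ε)*c^2*A + c^3*B := by
      rw [decomp G v z]
      have hzv : z v = x v - ε := by rw [hzdef]; exact if_pos rfl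
      have hAz : ∑ e ∈ G.edges.filter (fun e => v ∈ e), ∏ i ∈ e.erase v, z i = c^2 * A := by
        rw [hA, Finset.mul_sum]
        apply Finset.sum_congr rfl
        intro e he
        have hve : v ∈ e := (mem_filter.mp he).2
        have heE : e ∈ G.edges := (mem_filter.mp he).1
        have hcarde : (e.erase v).card = 2 := by
          rw [Finset.card_erase_of_mem hve, hu e heE]
        have hz' : ∀ i ∈ e.erase v, z i = c * x i := by
          intro i hi
          have h1 := Finset.mem_erase.mp hi
          have h2 : i ∈ G.verts := hwf e heE (Finset.erase_subset v e hi)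
          simp only [hzdef, if_neg h1.1, if_pos h2]
        rw [Finset.prod_congr rfl hz', Finset.prod_mul_distrib, Finset.prod_const, hcarde]
      have hBz : ∑ e ∈ G.edges.filter (fun e => v ∉ e), ∏ i ∈ e, z i = c^3 * B := by
        rw [hB, Finset.mul_sum]
        apply Finset.sum_congr rfl
        intro e he
        have hve : v ∉ e := (mem_filter.mp he).2
        have heE : e ∈ G.edges := (mem_filter.mp he).1
        have hcarde : e.card = 3 := hu e heE
        have hz' : ∀ i ∈ e, z i = c * x i := by
          intro i hi
          have h1 : i ≠ v := fun h => hve (h ▸ hi)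
          have h2 : i ∈ G.verts := hwf e heE hi
          simp only [hzdef, if_neg h1, if_pos h2]
        rw [Finset.prod_congr rfl hz', Finset.prod_mul_distrib, Finset.prod_const, hcarde]
      rw [hzv, hAz, hBz]
      ring
    have hxval : lagPoly G x = x v * A + B := decomp G v x
    rw [hzval, hxval] at hle
    exact hle
  have hC0 : (2*(x v)*r - 1)*A + 3*r*B ≤ 0 := by
    apply limit_lemma _ ((x v * r^2 - 2*r)*A + (3*r^2)*B) ((-(r^2))*A + r^3*B) (x v) hxv
    intro ε h0 h1
    have hh := hineq ε h0 h1
    have heq : ((2*(x v)*r - 1)*A + 3*r*B)*ε + ((x v * r^2 - 2*r)*A + (3*r^2)*B)*ε^2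
        + ((-(r^2))*A + r^3*B)*ε^3
        = (x v - ε)*(1+ε*r)^2*A + (1+ε*r)^3*B - (x v * A + B) := by ring
    linarith
  have hfin : ((2*(x v)*r - 1)*A + 3*r*B) * (1 - x v) ≤ 0 :=
    mul_nonpos_of_nonpos_of_nonneg hC0 (le_of_lt h1x)
  have e1 : ((2*(x v)*r - 1)*A + 3*r*B) * (1 - x v) = 3*(x v * A + B) - A := by
    linear_combination (2*(x v)*A + 3*B) * hr
  rw [e1] at hfin
  have hxval : lagPoly G x = x v * A + B := decomp G v x
  rw [hxval]
  linarith

private lemma two_A_le (G : FinHypergraph) (hwf : G.IsWf) (hu : G.IsUniform 3) (v : ℕ)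
    [inst : DecidableRel (linkGraph G v).Adj]
    (x : ℕ → ℝ) (hx0 : ∀ i, 0 ≤ x i) :
    2 * (∑ e ∈ G.edges.filter (fun e => v ∈ e), ∏ i ∈ e.erase v, x i)
      ≤ ∑ p ∈ ((G.verts.erase v) ×ˢ (G.verts.erase v)).filter
          (fun p => (linkGraph G v).Adj p.1 p.2), x p.1 * x p.2 := by
  classical
  set E' := G.edges.filter (fun e => v ∈ e) with hE'
  set Pe : Finset ℕ → Finset (ℕ × ℕ) :=
    fun e => ((e.erase v) ×ˢ (e.erase v)).filter (fun p => p.1 ≠ p.2) with hPe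
  have hErec : ∀ e ∈ E', ∀ p ∈ Pe e, e = insert v {p.1, p.2} ∧ p.1 ≠ p.2 := by
    intro e he p hp
    have hve : v ∈ e := (mem_filter.mp he).2
    have heE : e ∈ G.edges := (mem_filter.mp he).1
    have hcarde : (e.erase v).card = 2 := by
      rw [Finset.card_erase_of_mem hve, hu e heE]
    rw [hPe, mem_filter, mem_product] at hp
    obtain ⟨⟨hp1, hp2⟩, hne⟩ := hp
    have hsub : ({p.1, p.2} : Finset ℕ) ⊆ e.erase v := by
      intro j hj
      rcases Finset.mem_insert.mp hj with rfl | hj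
      · exact hp1
      · rw [Finset.mem_singleton.mp hj]; exact hp2
    have hcard2 : ({p.1, p.2} : Finset ℕ).card = 2 := Finset.card_pair hne
    have heq : ({p.1, p.2} : Finset ℕ) = e.erase v :=
      Finset.eq_of_subset_of_card_le hsub (by rw [hcarde, hcard2])
    constructor
    · rw [heq, Finset.insert_erase hve]
    · exact hne
  have hsum_eq : ∀ e ∈ E', ∑ p ∈ Pe e, x p.1 * x p.2 = 2 * ∏ i ∈ e.erase v, x i := by
    intro e he
    have hve : v ∈ e := (mem_filter.mp he).2
    have heE : e ∈ G.edges := (mem_filter.mp he).1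
    have hcarde : (e.erase v).card = 2 := by
      rw [Finset.card_erase_of_mem hve, hu e heE]
    obtain ⟨a, b, hab, habe⟩ := Finset.card_eq_two.mp hcarde
    have hPee : Pe e = {(a,b), (b,a)} := by
      rw [hPe]
      show ((e.erase v) ×ˢ (e.erase v)).filter (fun p => p.1 ≠ p.2) = {(a,b), (b,a)}
      rw [habe]
      ext ⟨c, d⟩
      simp only [mem_filter, mem_product, Finset.mem_insert, Finset.mem_singleton,
        Prod.mk.injEq]
      constructor
      · rintro ⟨⟨hc, hd⟩, hne⟩
        rcases hc with rfl | rfl <;> rcases hd with rfl | rfl <;> simp_all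
      · rintro (⟨rfl, rfl⟩ | ⟨rfl, rfl⟩) <;> simp_all [hab, Ne.symm hab]
    rw [hPee, Finset.sum_pair (by simp [hab]), habe, Finset.prod_pair hab]
    ring
  have hdisj : ((E' : Set (Finset ℕ))).PairwiseDisjoint Pe := by
    intro e he f hf hef
    simp only [Function.onFun, Finset.disjoint_left]
    intro p hpe hpf
    have h1 := hErec e he p hpe
    have h2 := hErec f hf p hpf
    exact hef (h1.1.trans h2.1.symm)
  have hbu : ∑ e ∈ E', ∑ p ∈ Pe e, x p.1 * x p.2
      = ∑ p ∈ E'.biUnion Pe, x p.1 * x p.2 := (Finset.sum_biUnion hdisj).symm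
  have hsub2 : E'.biUnion Pe ⊆ ((G.verts.erase v) ×ˢ (G.verts.erase v)).filter
      (fun p => (linkGraph G v).Adj p.1 p.2) := by
    intro p hp
    obtain ⟨e, he, hpe⟩ := Finset.mem_biUnion.mp hp
    have heE : e ∈ G.edges := (mem_filter.mp he).1
    have hrec := hErec e he p hpe
    rw [hPe, mem_filter, mem_product] at hpe
    obtain ⟨⟨hp1, hp2⟩, hne⟩ := hpe
    have hsubV : e.erase v ⊆ G.verts.erase v := Finset.erase_subset_erase v (hwf e heE)
    rw [mem_filter, mem_product]
    refine ⟨⟨hsubV hp1, hsubV hp2⟩, ?_⟩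
    rw [linkGraph, SimpleGraph.fromRel_adj]
    refine ⟨hne, Or.inl ?_⟩
    rw [← hrec.1]
    exact heE
  calc 2 * (∑ e ∈ E', ∏ i ∈ e.erase v, x i)
      = ∑ e ∈ E', 2 * ∏ i ∈ e.erase v, x i := by rw [Finset.mul_sum]
    _ = ∑ e ∈ E', ∑ p ∈ Pe e, x p.1 * x p.2 := (Finset.sum_congr rfl hsum_eq).symm
    _ = ∑ p ∈ E'.biUnion Pe, x p.1 * x p.2 := hbu
    _ ≤ ∑ p ∈ ((G.verts.erase v) ×ˢ (G.verts.erase v)).filter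
          (fun p => (linkGraph G v).Adj p.1 p.2), x p.1 * x p.2 :=
        Finset.sum_le_sum_of_subset_of_nonneg hsub2
          (fun p _ _ => mul_nonneg (hx0 p.1) (hx0 p.2))

/-- If `G` is a 3-graph with `λ(G) > λ(K_{k+1}³)`, `x` is an optimum weight
vector, and `v` is a vertex whose link graph has clique number at most `k`,
then `x v < 1/(k+1)`. -/
theorem stmt_7 (k : ℕ) (G : FinHypergraph) (hwf : G.IsWf) (hu : G.IsUniform 3)
    (hlag : lag (completeG (k + 1)) < lag G)
    (x : ℕ → ℝ) (hx : x ∈ simplex G) (hopt : lagPoly G x = lag G)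
    (v : ℕ) (hv : v ∈ G.verts)
    (hclique : ∀ K : Finset ℕ, (linkGraph G v).IsClique ↑K → K.card ≤ k) :
    x v < 1 / ((k : ℝ) + 1) := by
  classical
  have hk : 1 ≤ k := by
    by_contra hk0
    have hk00 : k = 0 := by omega
    subst hk00
    have h1 := hclique {0} (by simp [SimpleGraph.isClique_iff])
    simp at h1
  obtain ⟨m, rfl⟩ : ∃ m, k = m + 1 := ⟨k - 1, by omega⟩
  obtain ⟨hx01, hxsum⟩ := hx
  have hKlow : ((m:ℝ)+1)*m/(6*((m:ℝ)+2)^2) ≤ lag (completeG (m + 1 + 1)) := lag_complete m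
  have hG0 : 0 < lag G := lt_of_le_of_lt (le_trans (by positivity) hKlow) hlag
  rcases eq_or_lt_of_le (hx01 v).1 with h0 | hxv
  · rw [← h0]; positivity
  have hxv1 : x v < 1 := by
    by_contra hge
    push_neg at hge
    have hall : ∀ i ∈ G.verts, i ≠ v → x i = 0 := by
      intro i hi hiv
      have hsub : ({v, i} : Finset ℕ) ⊆ G.verts := by
        intro j hj
        rcases Finset.mem_insert.mp hj with rfl | hj
        · exact hv
        · rw [Finset.mem_singleton.mp hj]; exact hi
      have hs := Finset.sum_le_sum_of_subset_of_nonneg hsub (fun j _ _ => (hx01 j).1)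
      rw [Finset.sum_pair (Ne.symm hiv), hxsum] at hs
      have := (hx01 i).1
      linarith
    have hzero : lagPoly G x = 0 := by
      rw [lagPoly]
      apply Finset.sum_eq_zero
      intro e he
      have hcard := hu e he
      have hex : ∃ i ∈ e, i ≠ v := by
        by_contra hcon
        push_neg at hcon
        have hsub : e ⊆ {v} := fun i hi => Finset.mem_singleton.mpr (hcon i hi)
        have := Finset.card_le_card hsub
        rw [hcard, Finset.card_singleton] at this
        omega
      obtain ⟨i, hie, hiv⟩ := hex
      exact Finset.prod_eq_zero hie (hall i (hwf e he hie) hiv)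
    rw [hopt] at hzero
    linarith
  set A := ∑ e ∈ G.edges.filter (fun e => v ∈ e), ∏ i ∈ e.erase v, x i with hA
  have h3A : 3 * lagPoly G x ≤ A :=
    perturb G hwf hu x ⟨hx01, hxsum⟩ v hv hxv hxv1 hopt
  -- Motzkin–Straus
  have hMS : 2 * A ≤ (1 - 1/((m:ℝ)+1)) * (1 - x v)^2 := by
    set S := G.verts.erase v with hS
    set H := linkGraph G v with hH
    have h2A := two_A_le G hwf hu v x (fun i => (hx01 i).1)
    have hF := ms_main (H := H) (m+1) (by omega) hclique S S.card x
      (fun i => (hx01 i).1) (Finset.card_le_card (filter_subset _ _))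
    have hSsum : ∑ i ∈ S, x i = 1 - x v := by
      rw [hS, Finset.sum_erase_eq_sub hv, hxsum]
    rw [hSsum] at hF
    have hcast : ((m+1 : ℕ) : ℝ) = (m:ℝ)+1 := by push_cast; ring
    rw [hcast] at hF
    calc 2 * A ≤ ∑ p ∈ (S ×ˢ S).filter (fun p => H.Adj p.1 p.2), x p.1 * x p.2 := h2A
      _ ≤ (1 - 1/((m:ℝ)+1)) * (1 - x v)^2 := hF
  -- final algebra
  have hval : ((m:ℝ)+1)*m/(6*((m:ℝ)+2)^2) < lagPoly G x := by
    rw [hopt]; exact lt_of_le_of_lt hKlow hlag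
  have hgoal : x v < 1/((m:ℝ)+2) := by
    by_contra hcon
    push_neg at hcon
    have hm2 : (0:ℝ) < (m:ℝ)+2 := by positivity
    have hm1 : (0:ℝ) < (m:ℝ)+1 := by positivity
    have h1mx : 0 ≤ 1 - x v := by linarith [(hx01 v).2]
    have hub : 1 - x v ≤ ((m:ℝ)+1)/((m:ℝ)+2) := by
      rw [div_le_iff₀ hm2] at hcon
      rw [le_div_iff₀ hm2]
      nlinarith
    have hsq : (1 - x v)^2 ≤ (((m:ℝ)+1)/((m:ℝ)+2))^2 := by
      apply pow_le_pow_left₀ h1mx hub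
    have hfac : (0:ℝ) ≤ 1 - 1/((m:ℝ)+1) := by
      rw [sub_nonneg, div_le_one hm1]; linarith
    have hchain : 6 * lagPoly G x ≤ (1 - 1/((m:ℝ)+1)) * (((m:ℝ)+1)/((m:ℝ)+2))^2 := by
      calc 6 * lagPoly G x ≤ (1 - 1/((m:ℝ)+1)) * (1 - x v)^2 := by linarith
        _ ≤ (1 - 1/((m:ℝ)+1)) * (((m:ℝ)+1)/((m:ℝ)+2))^2 :=
            mul_le_mul_of_nonneg_left hsq hfac
    have heq2 : (1 - 1/((m:ℝ)+1)) * (((m:ℝ)+1)/((m:ℝ)+2))^2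
        = ((m:ℝ)+1)*m/((m:ℝ)+2)^2 := by
      field_simp
      ring
    have heq3 : 6 * (((m:ℝ)+1)*m/(6*((m:ℝ)+2)^2)) = ((m:ℝ)+1)*m/((m:ℝ)+2)^2 := by
      field_simp
    rw [heq2] at hchain
    linarith
  have hcast2 : ((m+1 : ℕ) : ℝ) + 1 = (m:ℝ)+2 := by push_cast; ring
  rw [hcast2]
  exact hgoal
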